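/- Let t ∈ C with |t| ≤ 1, λ ∈ [0,1), and 0 < β ≤ γ < 1. Then |γt(1-λ)/(1-γλt)|² ≤ (γ²(1-βλ)²)/(β²(1-γλ)²) · |βt(1-λ)/(1-βλt)|². -/

import Mathlib

lemma stmt_17_key (a b x y : ℝ) (ha0 : 0 ≤ a) (hab : a ≤ b) (hb1 : b < 1)
    (hs1 : x ^ 2 + y ^ 2 ≤ 1) :
    (1 - b)^2 * ((1 - a*x)^2 + (a*y)^2) ≤ (1 - a)^2 * ((1 - b*x)^2 + (b*y)^2) := by
  have hb0 : 0 ≤ b := le_trans ha0 hab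
  have ha1 : a < 1 := lt_of_le_of_lt hab hb1
  nlinarith [mul_nonneg (mul_nonneg (sub_nonneg.2 hab) (by nlinarith : (0:ℝ) ≤ 1 - a*b)) (sq_nonneg (1-x)),
    mul_nonneg (mul_nonneg (sub_nonneg.2 hab) (by nlinarith : (0:ℝ) ≤ 1 - a*b)) (sq_nonneg y),
    mul_nonneg (mul_nonneg (mul_nonneg (sub_nonneg.2 hab) (by linarith : (0:ℝ) ≤ 1 - a)) (by linarith : (0:ℝ) ≤ 1 - b)) (by linarith : (0:ℝ) ≤ 1 - (x^2+y^2))]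

lemma stmt_17_den (a x y : ℝ) (ha0 : 0 ≤ a) (ha1 : a < 1) (hs1 : x ^ 2 + y ^ 2 ≤ 1) :
    0 < (1 - a*x)^2 + (a*y)^2 := by
  have hne : (1 : ℝ) - a * x ≠ 0 ∨ a * y ≠ 0 := by
    by_contra h
    push_neg at h
    obtain ⟨h1, h2⟩ := h
    have hx2 : x^2 ≤ 1 := by nlinarith [sq_nonneg y]
    have hax : a * x = 1 := by linarith
    have h3 : a^2 * x^2 = 1 := by nlinarith [hax]
    nlinarith [mul_nonneg (sq_nonneg a) (by linarith : (0:ℝ) ≤ 1 - x^2)]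
  rcases hne with h | h
  · positivity
  · positivity

set_option maxHeartbeats 1000000 in
lemma stmt_17_real (lam γ β x y : ℝ) (hl0 : 0 ≤ lam) (hl1 : lam < 1)
    (hβ : 0 < β) (hβγ : β ≤ γ) (hγ : γ < 1) (hs1 : x ^ 2 + y ^ 2 ≤ 1) :
    (γ^2 * (x^2+y^2) * (1-lam)^2) / ((1 - γ*lam*x)^2 + (γ*lam*y)^2) ≤
      (γ ^ 2 * (1 - β * lam) ^ 2) / (β ^ 2 * (1 - γ * lam) ^ 2) *
        ((β^2 * (x^2+y^2) * (1-lam)^2) / ((1 - β*lam*x)^2 + (β*lam*y)^2)) := by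
  have hγ0 : 0 < γ := lt_of_lt_of_le hβ hβγ
  have hβ1 : β < 1 := lt_of_le_of_lt hβγ hγ
  have ha0 : 0 ≤ β * lam := mul_nonneg hβ.le hl0
  have hab : β * lam ≤ γ * lam := mul_le_mul_of_nonneg_right hβγ hl0
  have hb1 : γ * lam < 1 := by nlinarith
  have ha1 : β * lam < 1 := lt_of_le_of_lt hab hb1
  have hDa := stmt_17_den (β*lam) x y ha0 ha1 hs1
  have hDb := stmt_17_den (γ*lam) x y (le_trans ha0 hab) hb1 hs1
  have key := stmt_17_key (β*lam) (γ*lam) x y ha0 hab hb1 hs1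
  have hRW : (γ ^ 2 * (1 - β * lam) ^ 2) / (β ^ 2 * (1 - γ * lam) ^ 2) *
      ((β^2 * (x^2+y^2) * (1-lam)^2) / ((1 - β*lam*x)^2 + (β*lam*y)^2))
      = (γ^2 * (1-β*lam)^2 * (x^2+y^2) * (1-lam)^2) /
        ((1-γ*lam)^2 * ((1 - β*lam*x)^2 + (β*lam*y)^2)) := by
    have h1 : (1:ℝ) - γ*lam ≠ 0 := by linarith
    have h2 : (β:ℝ) ≠ 0 := ne_of_gt hβ
    have h3 : ((1 - β*lam*x)^2 + (β*lam*y)^2) ≠ 0 := ne_of_gt hDa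
    field_simp
  rw [hRW, div_le_div_iff₀ hDb (mul_pos (pow_pos (by linarith : (0:ℝ) < 1 - γ*lam) 2) hDa)]
  nlinarith [mul_nonneg (mul_nonneg (mul_nonneg (sq_nonneg γ) (by positivity : (0:ℝ) ≤ x^2+y^2)) (sq_nonneg (1-lam))) (sub_nonneg.2 key)]

theorem stmt_17 (t : ℂ) (ht : ‖t‖ ≤ 1)
    (lam : ℝ) (hlam : lam ∈ Set.Ico (0 : ℝ) 1)
    (γ β : ℝ) (hβ : 0 < β) (hβγ : β ≤ γ) (hγ : γ < 1) :
    ‖(γ : ℂ) * t * (1 - (lam : ℂ)) / (1 - (γ : ℂ) * (lam : ℂ) * t)‖ ^ 2 ≤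
      (γ ^ 2 * (1 - β * lam) ^ 2) / (β ^ 2 * (1 - γ * lam) ^ 2) *
        ‖(β : ℂ) * t * (1 - (lam : ℂ)) / (1 - (β : ℂ) * (lam : ℂ) * t)‖ ^ 2 := by
  obtain ⟨hl0, hl1⟩ := hlam
  have hγ0 : 0 < γ := lt_of_lt_of_le hβ hβγ
  have hts : ‖t‖ ^ 2 = t.re ^ 2 + t.im ^ 2 := by
    rw [Complex.sq_norm, Complex.normSq_apply]; ring
  have hs1 : t.re ^ 2 + t.im ^ 2 ≤ 1 := by nlinarith [norm_nonneg t]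
  have hnsq : ∀ c : ℝ, ‖(1 - (c : ℂ) * (lam : ℂ) * t)‖ ^ 2
      = (1 - c * lam * t.re)^2 + (c * lam * t.im)^2 := by
    intro c
    rw [Complex.sq_norm, Complex.normSq_apply]
    simp [Complex.sub_re, Complex.sub_im, Complex.mul_re, Complex.mul_im]
    ring
  have hnum : ∀ c : ℝ, 0 ≤ c → ‖(c : ℂ) * t * (1 - (lam : ℂ))‖ ^ 2
      = c^2 * (t.re^2 + t.im^2) * (1 - lam)^2 := by
    intro c hc
    have h1 : (1 - (lam : ℂ)) = ((1 - lam : ℝ) : ℂ) := by push_cast; ring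
    rw [norm_mul, norm_mul, h1, Complex.norm_real, Complex.norm_real,
      Real.norm_eq_abs, Real.norm_eq_abs, abs_of_nonneg hc,
      abs_of_nonneg (by linarith : (0:ℝ) ≤ 1 - lam), mul_pow, mul_pow, hts]
  have hLHS : ‖(γ : ℂ) * t * (1 - (lam : ℂ)) / (1 - (γ : ℂ) * (lam : ℂ) * t)‖ ^ 2
      = (γ^2 * (t.re^2 + t.im^2) * (1-lam)^2) / ((1 - γ*lam*t.re)^2 + (γ*lam*t.im)^2) := by
    rw [norm_div, div_pow, hnum γ hγ0.le, hnsq γ]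
  have hRHSn : ‖(β : ℂ) * t * (1 - (lam : ℂ)) / (1 - (β : ℂ) * (lam : ℂ) * t)‖ ^ 2
      = (β^2 * (t.re^2 + t.im^2) * (1-lam)^2) / ((1 - β*lam*t.re)^2 + (β*lam*t.im)^2) := by
    rw [norm_div, div_pow, hnum β hβ.le, hnsq β]
  rw [hLHS, hRHSn]
  exact stmt_17_real lam γ β t.re t.im hl0 hl1 hβ hβγ hγ hs1
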